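/- Let N be a phylogenetic network on taxa set X and let (x,y) be a reducible pair of N. Then every reducible pair of N(x,y) that is not a reducible pair of N involves x or y; formally, C(N(x,y)) \ C(N) ⊆ ({x,y} × X) ∪ (X × {x,y}). -/

import Mathlib

open scoped Classical

/-- A (representation of a) rooted phylogenetic network: vertices are natural
numbers, `E` is the edge set, `root` the root, `taxa` the set of taxa labelling
the leaves via `label`. -/
structure Network (X : Type) where
  V : Finset ℕ
  E : Finset (ℕ × ℕ)
  root : ℕ
  taxa : Finset X
  label : X → ℕ

namespace Network

variable {X : Type}

noncomputable def indeg (N : Network X) (v : ℕ) : ℕ :=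
  (N.E.filter (fun e => e.2 = v)).card

noncomputable def outdeg (N : Network X) (v : ℕ) : ℕ :=
  (N.E.filter (fun e => e.1 = v)).card

noncomputable def parents (N : Network X) (v : ℕ) : Finset ℕ :=
  (N.E.filter (fun e => e.2 = v)).image Prod.fst

noncomputable def children (N : Network X) (v : ℕ) : Finset ℕ :=
  (N.E.filter (fun e => e.1 = v)).image Prod.snd

/-- The parent of a vertex (meaningful when the vertex has a unique parent,
e.g. for leaves). -/
noncomputable def theParent (N : Network X) (v : ℕ) : ℕ :=
  (N.parents v).min.untopD 0

def IsLeafNode (N : Network X) (v : ℕ) : Prop := N.indeg v = 1 ∧ N.outdeg v = 0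

def IsTreeNode (N : Network X) (v : ℕ) : Prop := N.indeg v = 1 ∧ 2 ≤ N.outdeg v

def IsRetic (N : Network X) (v : ℕ) : Prop := 2 ≤ N.indeg v ∧ N.outdeg v = 1

/-- Well-formedness: a phylogenetic network has a single outdegree-1, indegree-0
root, leaves bijectively labelled by the taxa, all other nodes tree nodes or
reticulations, and it is acyclic. -/
def IsPhylo (N : Network X) : Prop :=
  N.root ∈ N.V ∧ N.indeg N.root = 0 ∧ N.outdeg N.root = 1 ∧
  (∀ e ∈ N.E, e.1 ∈ N.V ∧ e.2 ∈ N.V) ∧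
  Set.InjOn N.label ↑N.taxa ∧
  (∀ x ∈ N.taxa, N.label x ∈ N.V ∧ N.IsLeafNode (N.label x)) ∧
  (∀ v ∈ N.V, N.IsLeafNode v → ∃ x ∈ N.taxa, N.label x = v) ∧
  (∀ v ∈ N.V, v = N.root ∨ N.IsLeafNode v ∨ N.IsTreeNode v ∨ N.IsRetic v) ∧
  (∀ v : ℕ, ¬ Relation.TransGen (fun a b => (a, b) ∈ N.E) v v)

def SemiBinary (N : Network X) : Prop := ∀ v ∈ N.V, N.IsTreeNode v → N.outdeg v = 2

def IsBinary (N : Network X) : Prop :=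
  N.SemiBinary ∧ ∀ v ∈ N.V, N.IsRetic v → N.indeg v = 2

def StackFree (N : Network X) : Prop :=
  ∀ e ∈ N.E, ¬ (N.IsRetic e.1 ∧ N.IsRetic e.2)

def IsTreeChild (N : Network X) : Prop :=
  N.StackFree ∧
  ∀ v ∈ N.V, N.IsTreeNode v → ∃ c ∈ N.children v, N.IsTreeNode c ∨ N.IsLeafNode c

def IsTree (N : Network X) : Prop := ∀ v ∈ N.V, ¬ N.IsRetic v

/-- Number of reticulation edges minus number of reticulations. -/
noncomputable def reticulationNumber (N : Network X) : ℕ :=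
  (N.E.filter (fun e => N.IsRetic e.2)).card - (N.V.filter (fun v => N.IsRetic v)).card

/-- `(x, y)` is a cherry: two distinct leaves sharing a parent. -/
def IsCherry (N : Network X) (x y : X) : Prop :=
  x ∈ N.taxa ∧ y ∈ N.taxa ∧ x ≠ y ∧
  ∃ p : ℕ, (p, N.label x) ∈ N.E ∧ (p, N.label y) ∈ N.E

/-- `(x, y)` is a reticulated cherry: the parent of `x` is a reticulation, the
parent of `y` a tree node which is also a parent of the parent of `x`. -/
def IsRetCherry (N : Network X) (x y : X) : Prop :=
  x ∈ N.taxa ∧ y ∈ N.taxa ∧ x ≠ y ∧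
  ∃ px py : ℕ, (px, N.label x) ∈ N.E ∧ (py, N.label y) ∈ N.E ∧
    N.IsRetic px ∧ N.IsTreeNode py ∧ (py, px) ∈ N.E

def ReduciblePair (N : Network X) (x y : X) : Prop :=
  N.IsCherry x y ∨ N.IsRetCherry x y

noncomputable def delVert (N : Network X) (v : ℕ) : Network X :=
  { V := N.V.erase v,
    E := N.E.filter (fun e => e.1 ≠ v ∧ e.2 ≠ v),
    root := N.root, taxa := N.taxa, label := N.label }

noncomputable def delEdge (N : Network X) (e : ℕ × ℕ) : Network X :=
  { N with E := N.E.erase e }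

/-- Suppress a degree-2 (indegree-1, outdegree-1) vertex. -/
noncomputable def suppress (N : Network X) (v : ℕ) : Network X :=
  if N.indeg v = 1 ∧ N.outdeg v = 1 then
    { V := N.V.erase v,
      E := (N.E.filter (fun e => e.1 ≠ v ∧ e.2 ≠ v)) ∪ (N.parents v ×ˢ N.children v),
      root := N.root, taxa := N.taxa, label := N.label }
  else N

/-- Reduce an ordered pair `(x, y)`: in the cherry case delete the leaf `x` and
suppress its parent; in the reticulated-cherry case delete the reticulation edge
between the two parents and suppress the resulting degree-2 vertices; otherwise
do nothing. -/
noncomputable def reducePair (N : Network X) (c : X × X) : Network X :=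
  if N.IsCherry c.1 c.2 then
    suppress
      { V := N.V.erase (N.label c.1),
        E := N.E.filter (fun e => e.1 ≠ N.label c.1 ∧ e.2 ≠ N.label c.1),
        root := N.root, taxa := N.taxa.erase c.1, label := N.label }
      (N.theParent (N.label c.1))
  else if N.IsRetCherry c.1 c.2 then
    (((N.delEdge (N.theParent (N.label c.2), N.theParent (N.label c.1))).suppress
        (N.theParent (N.label c.2))).suppress (N.theParent (N.label c.1)))
  else N

/-- Successive reduction of a network by a sequence of ordered pairs. -/
noncomputable def reduceSeq (N : Network X) (S : List (X × X)) : Network X :=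
  S.foldl (fun M c => M.reducePair c) N

/-- A network consisting of a single leaf, its root, and the edge between them. -/
def IsSingleLeaf (N : Network X) : Prop :=
  ∃ x ∈ N.taxa, N.V = {N.root, N.label x} ∧ N.E = {(N.root, N.label x)} ∧
    N.root ≠ N.label x

/-- `S` reduces `N` to a single-leaf network. -/
def Reduces (S : List (X × X)) (N : Network X) : Prop :=
  (N.reduceSeq S).IsSingleLeaf

/-- A cherry-picking sequence: ordered pairs of distinct taxa such that each
second coordinate reappears later as a first coordinate, or is the second
coordinate of the last pair. -/
def IsCPS (S : List (X × X)) : Prop :=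
  (∀ p ∈ S, p.1 ≠ p.2) ∧
  ∀ (i : ℕ) (hi : i < S.length),
    ((S.get ⟨i, hi⟩).2 ∈ (S.drop (i + 1)).map Prod.fst) ∨
    (∃ q, S.getLast? = some q ∧ (S.get ⟨i, hi⟩).2 = q.2)

/-- A tree-child sequence: a CPS in which a leaf appearing as a first coordinate
never appears later as a second coordinate. -/
def IsTCS (S : List (X × X)) : Prop :=
  IsCPS S ∧
  ∀ (i j : ℕ) (hi : i < S.length) (hj : j < S.length),
    i < j → (S.get ⟨i, hi⟩).1 ≠ (S.get ⟨j, hj⟩).2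

def IsPartialCPS (S : List (X × X)) : Prop := ∃ T, IsCPS (S ++ T)

def IsPartialTCS (S : List (X × X)) : Prop := ∃ T, IsTCS (S ++ T)

/-- A minimal CPS for `N`: a CPS reducing `N` in which every pair changes the
network. -/
def IsMinimalCPS (S : List (X × X)) (N : Network X) : Prop :=
  IsCPS S ∧ Reduces S N ∧
  ∀ i < S.length, N.reduceSeq (S.take (i + 1)) ≠ N.reduceSeq (S.take i)

def IsMinimalTCS (S : List (X × X)) (N : Network X) : Prop :=
  IsTCS S ∧ Reduces S N ∧
  ∀ i < S.length, N.reduceSeq (S.take (i + 1)) ≠ N.reduceSeq (S.take i)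

/-- A cherry-picking network: a phylogenetic network reducible by some CPS. -/
def IsCPN (N : Network X) : Prop :=
  N.IsPhylo ∧ ∃ S, IsCPS S ∧ Reduces S N

/-- A directed path in `N`, given as its list of vertices. -/
def IsDipath (N : Network X) (l : List ℕ) : Prop :=
  l.Chain' (fun a b => (a, b) ∈ N.E)

def pathEdges (l : List ℕ) : List (ℕ × ℕ) := l.zip l.tail

/-- An embedding of `N'` into `N`: an injective node map and a map of edges to
edge-disjoint directed paths, respecting the node map and the leaf labels. -/
def IsEmbedding (N' N : Network X) (f : ℕ → ℕ) (g : ℕ × ℕ → List ℕ) : Prop :=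
  (∀ v ∈ N'.V, f v ∈ N.V) ∧
  Set.InjOn f ↑N'.V ∧
  (∀ x ∈ N'.taxa, f (N'.label x) = N.label x) ∧
  (∀ e ∈ N'.E, N.IsDipath (g e) ∧ (g e).head? = some (f e.1) ∧
    (g e).getLast? = some (f e.2)) ∧
  (∀ e ∈ N'.E, ∀ e' ∈ N'.E, e ≠ e' →
    ∀ p ∈ pathEdges (g e), p ∉ pathEdges (g e'))

/-- `N'` is a subnetwork of `N` if `N'` embeds into `N`. -/
def IsSubnetwork (N' N : Network X) : Prop :=
  ∃ f g, IsEmbedding N' N f g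

/-- Contract the edge `(u, v)`, identifying `v` with `u`. -/
noncomputable def contractEdge (N : Network X) (u v : ℕ) : Network X :=
  { V := N.V.erase v,
    E := (N.E.erase (u, v)).image
      (fun e => ((if e.1 = v then u else e.1), (if e.2 = v then u else e.2))),
    root := if N.root = v then u else N.root,
    taxa := N.taxa,
    label := fun x => if N.label x = v then u else N.label x }

def ContractStep (N M : Network X) : Prop :=
  ∃ u v : ℕ, (u, v) ∈ N.E ∧ M = N.contractEdge u v

/-- `N` is a refinement of `M` if `M` can be obtained from `N` by contracting
some edges. -/
def IsRefinement (N M : Network X) : Prop :=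
  Relation.ReflTransGen ContractStep N M

/-- `N` contains `M` if some refinement of `M` is a subnetwork of `N`. -/
def Contains (N M : Network X) : Prop :=
  ∃ M' : Network X, IsRefinement M' M ∧ IsSubnetwork M' N

/-- Isomorphism of labelled networks. -/
def Isomorphic (N N' : Network X) : Prop :=
  N.taxa = N'.taxa ∧
  ∃ f : ℕ → ℕ, Set.BijOn f ↑N.V ↑N'.V ∧
    (∀ u ∈ N.V, ∀ v ∈ N.V, ((u, v) ∈ N.E ↔ (f u, f v) ∈ N'.E)) ∧
    f N.root = N'.root ∧
    (∀ x ∈ N.taxa, f (N.label x) = N'.label x)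

end Network
namespace Network

variable {X : Type} {N M : Network X}

lemma edge_into_unique {v p q : ℕ} (h : N.indeg v = 1)
    (hp : (p, v) ∈ N.E) (hq : (q, v) ∈ N.E) : p = q := by
  have h1 := Finset.card_le_one.mp h.le (p, v)
    (Finset.mem_filter.mpr ⟨hp, rfl⟩) (q, v) (Finset.mem_filter.mpr ⟨hq, rfl⟩)
  exact congrArg Prod.fst h1

lemma edge_out_unique {v p q : ℕ} (h : N.outdeg v = 1)
    (hp : (v, p) ∈ N.E) (hq : (v, q) ∈ N.E) : p = q := by
  have h1 := Finset.card_le_one.mp h.le (v, p)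
    (Finset.mem_filter.mpr ⟨hp, rfl⟩) (v, q) (Finset.mem_filter.mpr ⟨hq, rfl⟩)
  exact congrArg Prod.snd h1

lemma exists_edge_into {v : ℕ} (h : N.indeg v = 1) : ∃ p, (p, v) ∈ N.E := by
  have hne : (N.E.filter (fun e => e.2 = v)).Nonempty :=
    Finset.card_pos.mp (by rw [show (N.E.filter (fun e => e.2 = v)).card = 1 from h]; omega)
  obtain ⟨⟨a, b⟩, he⟩ := hne
  rw [Finset.mem_filter] at he
  obtain ⟨he1, he2⟩ := he
  simp only at he2
  subst he2
  exact ⟨a, he1⟩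

lemma no_out_edge {v b : ℕ} (h : N.outdeg v = 0) : (v, b) ∉ N.E := by
  intro hb
  have : (v, b) ∈ N.E.filter (fun e => e.1 = v) := Finset.mem_filter.mpr ⟨hb, rfl⟩
  rw [Finset.card_eq_zero.mp h] at this
  simp at this

lemma two_le_outdeg {v a b : ℕ} (ha : (v, a) ∈ N.E) (hb : (v, b) ∈ N.E) (hab : a ≠ b) :
    2 ≤ N.outdeg v :=
  Finset.one_lt_card.mpr ⟨(v, a), Finset.mem_filter.mpr ⟨ha, rfl⟩,
    (v, b), Finset.mem_filter.mpr ⟨hb, rfl⟩, by simp [hab]⟩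

lemma theParent_eq {v p : ℕ} (h : N.indeg v = 1) (hp : (p, v) ∈ N.E) :
    N.theParent v = p := by
  have hpar : N.parents v = {p} := by
    obtain ⟨e, he⟩ := Finset.card_eq_one.mp h
    have hmem : (p, v) ∈ N.E.filter (fun e => e.2 = v) := Finset.mem_filter.mpr ⟨hp, rfl⟩
    rw [he, Finset.mem_singleton] at hmem
    unfold parents
    rw [he, ← hmem]
    simp
  simp only [theParent, hpar, Finset.min_singleton]
  rfl

lemma children_eq_singleton {v b : ℕ} (h : N.outdeg v = 1) (hb : (v, b) ∈ N.E) :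
    N.children v = {b} := by
  obtain ⟨e, he⟩ := Finset.card_eq_one.mp h
  have hmem : (v, b) ∈ N.E.filter (fun e => e.1 = v) := Finset.mem_filter.mpr ⟨hb, rfl⟩
  rw [he, Finset.mem_singleton] at hmem
  unfold children
  rw [he, ← hmem]
  simp

lemma parents_eq_singleton {v a : ℕ} (h : N.indeg v = 1) (ha : (a, v) ∈ N.E) :
    N.parents v = {a} := by
  obtain ⟨e, he⟩ := Finset.card_eq_one.mp h
  have hmem : (a, v) ∈ N.E.filter (fun e => e.2 = v) := Finset.mem_filter.mpr ⟨ha, rfl⟩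
  rw [he, Finset.mem_singleton] at hmem
  unfold parents
  rw [he, ← hmem]
  simp

lemma suppress_E_eq {v a b : ℕ} (hin : M.indeg v = 1) (hout : M.outdeg v = 1)
    (ha : (a, v) ∈ M.E) (hb : (v, b) ∈ M.E) :
    (M.suppress v).E = (M.E.filter (fun e => e.1 ≠ v ∧ e.2 ≠ v)) ∪ {(a, b)} := by
  rw [suppress, if_pos ⟨hin, hout⟩]
  rw [parents_eq_singleton hin ha, children_eq_singleton hout hb]
  simp

lemma suppress_taxa (v : ℕ) : (M.suppress v).taxa = M.taxa := by
  unfold suppress; split <;> rfl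

lemma suppress_label (v : ℕ) : (M.suppress v).label = M.label := by
  unfold suppress; split <;> rfl

lemma suppress_of_not {v : ℕ} (h : ¬ (M.indeg v = 1 ∧ M.outdeg v = 1)) :
    M.suppress v = M := by
  rw [suppress, if_neg h]

end Network
namespace Network

variable {X : Type} {N M : Network X}

lemma suppress_indeg {v a b : ℕ} (hin : M.indeg v = 1) (hout : M.outdeg v = 1)
    (ha : (a, v) ∈ M.E) (hb : (v, b) ∈ M.E)
    (hav : a ≠ v) (hbv : b ≠ v) (hab : (a, b) ∉ M.E)
    {u : ℕ} (hu : u ≠ v) : (M.suppress v).indeg u = M.indeg u := by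
  unfold indeg
  rw [suppress_E_eq hin hout ha hb, Finset.filter_union, Finset.filter_filter]
  by_cases hub : b = u
  · subst hub
    have h1 : (M.E.filter fun e => (e.1 ≠ v ∧ e.2 ≠ v) ∧ e.2 = b)
        = (M.E.filter fun e => e.2 = b).erase (v, b) := by
      ext e
      simp only [Finset.mem_filter, Finset.mem_erase]
      constructor
      · rintro ⟨he, ⟨h1, h2⟩, h3⟩
        exact ⟨fun hh => h1 (by rw [hh]), he, h3⟩
      · rintro ⟨hne, he, h3⟩
        refine ⟨he, ⟨fun h1v => hne (Prod.ext h1v h3), by rw [h3]; exact hbv⟩, h3⟩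
    have h2 : Finset.filter (fun e => e.2 = b) {(a, b)} = {(a, b)} := by
      rw [Finset.filter_singleton, if_pos rfl]
    have hmem : (v, b) ∈ M.E.filter (fun e => e.2 = b) := Finset.mem_filter.mpr ⟨hb, rfl⟩
    rw [h1, h2, Finset.card_union_of_disjoint, Finset.card_erase_of_mem hmem,
      Finset.card_singleton]
    · have hpos : 1 ≤ (M.E.filter fun e => e.2 = b).card := Finset.card_pos.mpr ⟨(v, b), hmem⟩
      omega
    · simp only [Finset.disjoint_singleton_right, Finset.mem_erase, Finset.mem_filter]
      intro hmem
      exact hab hmem.2.1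
  · have h2 : Finset.filter (fun e => e.2 = u) {(a, b)} = ∅ := by
      rw [Finset.filter_singleton, if_neg hub]
    rw [h2, Finset.union_empty]
    congr 1
    ext e
    simp only [Finset.mem_filter]
    constructor
    · rintro ⟨he, -, h3⟩
      exact ⟨he, h3⟩
    · rintro ⟨he, h3⟩
      refine ⟨he, ⟨?_, by rw [h3]; exact hu⟩, h3⟩
      intro h1v
      have : (v, e.2) ∈ M.E := by rwa [← h1v]
      exact hub ((edge_out_unique hout hb this).trans h3)

lemma suppress_outdeg {v a b : ℕ} (hin : M.indeg v = 1) (hout : M.outdeg v = 1)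
    (ha : (a, v) ∈ M.E) (hb : (v, b) ∈ M.E)
    (hav : a ≠ v) (hbv : b ≠ v) (hab : (a, b) ∉ M.E)
    {u : ℕ} (hu : u ≠ v) : (M.suppress v).outdeg u = M.outdeg u := by
  unfold outdeg
  rw [suppress_E_eq hin hout ha hb, Finset.filter_union, Finset.filter_filter]
  by_cases hub : a = u
  · subst hub
    have h1 : (M.E.filter fun e => (e.1 ≠ v ∧ e.2 ≠ v) ∧ e.1 = a)
        = (M.E.filter fun e => e.1 = a).erase (a, v) := by
      ext e
      simp only [Finset.mem_filter, Finset.mem_erase]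
      constructor
      · rintro ⟨he, ⟨h1, h2⟩, h3⟩
        exact ⟨fun hh => h2 (by rw [hh]), he, h3⟩
      · rintro ⟨hne, he, h3⟩
        refine ⟨he, ⟨by rw [h3]; exact hu, fun h2v => hne (Prod.ext h3 h2v)⟩, h3⟩
    have h2 : Finset.filter (fun e => e.1 = a) {(a, b)} = {(a, b)} := by
      rw [Finset.filter_singleton, if_pos rfl]
    have hmem : (a, v) ∈ M.E.filter (fun e => e.1 = a) := Finset.mem_filter.mpr ⟨ha, rfl⟩
    rw [h1, h2, Finset.card_union_of_disjoint, Finset.card_erase_of_mem hmem,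
      Finset.card_singleton]
    · have hpos : 1 ≤ (M.E.filter fun e => e.1 = a).card := Finset.card_pos.mpr ⟨(a, v), hmem⟩
      omega
    · simp only [Finset.disjoint_singleton_right, Finset.mem_erase, Finset.mem_filter]
      intro hmem
      exact hab hmem.2.1
  · have h2 : Finset.filter (fun e => e.1 = u) {(a, b)} = ∅ := by
      rw [Finset.filter_singleton, if_neg hub]
    rw [h2, Finset.union_empty]
    congr 1
    ext e
    simp only [Finset.mem_filter]
    constructor
    · rintro ⟨he, -, h3⟩
      exact ⟨he, h3⟩
    · rintro ⟨he, h3⟩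
      refine ⟨he, ⟨by rw [h3]; exact hu, ?_⟩, h3⟩
      intro h2v
      have : (e.1, v) ∈ M.E := by rwa [← h2v]
      exact hub ((edge_into_unique hin ha this).trans h3)

lemma suppress_indeg_self {v a b : ℕ} (hin : M.indeg v = 1) (hout : M.outdeg v = 1)
    (ha : (a, v) ∈ M.E) (hb : (v, b) ∈ M.E) (hbv : b ≠ v) :
    (M.suppress v).indeg v = 0 := by
  unfold indeg
  rw [suppress_E_eq hin hout ha hb, Finset.card_eq_zero, Finset.filter_union]
  rw [Finset.union_eq_empty]
  constructor
  · rw [Finset.filter_filter, Finset.filter_eq_empty_iff]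
    rintro e he ⟨⟨-, h2⟩, h3⟩
    exact h2 h3
  · rw [Finset.filter_singleton, if_neg hbv]

lemma suppress_outdeg_self {v a b : ℕ} (hin : M.indeg v = 1) (hout : M.outdeg v = 1)
    (ha : (a, v) ∈ M.E) (hb : (v, b) ∈ M.E) (hav : a ≠ v) :
    (M.suppress v).outdeg v = 0 := by
  unfold outdeg
  rw [suppress_E_eq hin hout ha hb, Finset.card_eq_zero, Finset.filter_union]
  rw [Finset.union_eq_empty]
  constructor
  · rw [Finset.filter_filter, Finset.filter_eq_empty_iff]
    rintro e he ⟨⟨h1, -⟩, h3⟩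
    exact h1 h3
  · rw [Finset.filter_singleton, if_neg hav]

lemma delEdge_indeg {e₀ : ℕ × ℕ} {u : ℕ} (hu : u ≠ e₀.2) :
    (N.delEdge e₀).indeg u = N.indeg u := by
  unfold indeg delEdge
  congr 1
  ext e
  simp only [Finset.mem_filter, Finset.mem_erase]
  constructor
  · rintro ⟨⟨-, he⟩, h2⟩
    exact ⟨he, h2⟩
  · rintro ⟨he, h2⟩
    exact ⟨⟨fun h => hu (by rw [← h2, h]), he⟩, h2⟩

lemma delEdge_outdeg {e₀ : ℕ × ℕ} {u : ℕ} (hu : u ≠ e₀.1) :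
    (N.delEdge e₀).outdeg u = N.outdeg u := by
  unfold outdeg delEdge
  congr 1
  ext e
  simp only [Finset.mem_filter, Finset.mem_erase]
  constructor
  · rintro ⟨⟨-, he⟩, h2⟩
    exact ⟨he, h2⟩
  · rintro ⟨he, h2⟩
    exact ⟨⟨fun h => hu (by rw [← h2, h]), he⟩, h2⟩

lemma delEdge_indeg_target {e₀ : ℕ × ℕ} (h : e₀ ∈ N.E) :
    (N.delEdge e₀).indeg e₀.2 = N.indeg e₀.2 - 1 := by
  unfold indeg delEdge
  have hmem : e₀ ∈ N.E.filter (fun e => e.2 = e₀.2) := Finset.mem_filter.mpr ⟨h, rfl⟩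
  rw [Finset.filter_erase, Finset.card_erase_of_mem hmem]

lemma delEdge_outdeg_src {e₀ : ℕ × ℕ} (h : e₀ ∈ N.E) :
    (N.delEdge e₀).outdeg e₀.1 = N.outdeg e₀.1 - 1 := by
  unfold outdeg delEdge
  have hmem : e₀ ∈ N.E.filter (fun e => e.1 = e₀.1) := Finset.mem_filter.mpr ⟨h, rfl⟩
  rw [Finset.filter_erase, Finset.card_erase_of_mem hmem]

lemma filterV_indeg {l u : ℕ} (hl : N.outdeg l = 0) (hu : u ≠ l) :
    ((N.E.filter (fun e => e.1 ≠ l ∧ e.2 ≠ l)).filter (fun e => e.2 = u)).card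
      = N.indeg u := by
  unfold indeg
  rw [Finset.filter_filter]
  congr 1
  ext e
  simp only [Finset.mem_filter]
  constructor
  · rintro ⟨he, -, h3⟩
    exact ⟨he, h3⟩
  · rintro ⟨he, h3⟩
    refine ⟨he, ⟨?_, by rw [h3]; exact hu⟩, h3⟩
    intro h1
    exact no_out_edge hl (show (l, e.2) ∈ N.E by rwa [← h1])

lemma filterV_indeg_self {l : ℕ} :
    ((N.E.filter (fun e => e.1 ≠ l ∧ e.2 ≠ l)).filter (fun e => e.2 = l)).card = 0 := by
  rw [Finset.card_eq_zero, Finset.filter_filter, Finset.filter_eq_empty_iff]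
  rintro e he ⟨⟨-, h2⟩, h3⟩
  exact h2 h3

lemma filterV_outdeg_self {l : ℕ} :
    ((N.E.filter (fun e => e.1 ≠ l ∧ e.2 ≠ l)).filter (fun e => e.1 = l)).card = 0 := by
  rw [Finset.card_eq_zero, Finset.filter_filter, Finset.filter_eq_empty_iff]
  rintro e he ⟨⟨h1, -⟩, h3⟩
  exact h1 h3

lemma filterV_outdeg {l p u : ℕ} (hin : N.indeg l = 1) (hp : (p, l) ∈ N.E)
    (hu : u ≠ l) (hup : u ≠ p) :
    ((N.E.filter (fun e => e.1 ≠ l ∧ e.2 ≠ l)).filter (fun e => e.1 = u)).card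
      = N.outdeg u := by
  unfold outdeg
  rw [Finset.filter_filter]
  congr 1
  ext e
  simp only [Finset.mem_filter]
  constructor
  · rintro ⟨he, -, h3⟩
    exact ⟨he, h3⟩
  · rintro ⟨he, h3⟩
    refine ⟨he, ⟨by rw [h3]; exact hu, ?_⟩, h3⟩
    intro h2
    have : (e.1, l) ∈ N.E := by rwa [← h2]
    exact hup (by rw [← h3, edge_into_unique hin this hp])

lemma filterV_outdeg_parent {l p : ℕ} (hp : (p, l) ∈ N.E) (hpl : p ≠ l) :
    ((N.E.filter (fun e => e.1 ≠ l ∧ e.2 ≠ l)).filter (fun e => e.1 = p)).card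
      = N.outdeg p - 1 := by
  unfold outdeg
  rw [Finset.filter_filter]
  have h1 : (N.E.filter fun e => (e.1 ≠ l ∧ e.2 ≠ l) ∧ e.1 = p)
      = (N.E.filter fun e => e.1 = p).erase (p, l) := by
    ext e
    simp only [Finset.mem_filter, Finset.mem_erase]
    constructor
    · rintro ⟨he, ⟨-, h2⟩, h3⟩
      exact ⟨fun hh => h2 (by rw [hh]), he, h3⟩
    · rintro ⟨hne, he, h3⟩
      exact ⟨he, ⟨by rw [h3]; exact hpl, fun h2 => hne (Prod.ext h3 h2)⟩, h3⟩
  have hmem : (p, l) ∈ N.E.filter (fun e => e.1 = p) := Finset.mem_filter.mpr ⟨hp, rfl⟩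
  rw [h1, Finset.card_erase_of_mem hmem]

end Network
namespace Network

variable {X : Type} {N : Network X}

/-- Delete the leaf labelled by `x` (the first stage of a cherry reduction). -/
noncomputable def delLeafNet (N : Network X) (x : X) : Network X :=
  { V := N.V.erase (N.label x),
    E := N.E.filter (fun e => e.1 ≠ N.label x ∧ e.2 ≠ N.label x),
    root := N.root, taxa := N.taxa.erase x, label := N.label }

lemma delLeafNet_E (x : X) :
    (N.delLeafNet x).E = N.E.filter (fun e => e.1 ≠ N.label x ∧ e.2 ≠ N.label x) := rfl

lemma delLeafNet_taxa (x : X) : (N.delLeafNet x).taxa = N.taxa.erase x := rfl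

lemma delLeafNet_label (x : X) : (N.delLeafNet x).label = N.label := rfl

lemma delLeafNet_indeg {x : X} (hl : N.outdeg (N.label x) = 0) {u : ℕ}
    (hu : u ≠ N.label x) : (N.delLeafNet x).indeg u = N.indeg u :=
  filterV_indeg hl hu

lemma delLeafNet_indeg_self (x : X) : (N.delLeafNet x).indeg (N.label x) = 0 :=
  filterV_indeg_self

lemma delLeafNet_outdeg_self (x : X) : (N.delLeafNet x).outdeg (N.label x) = 0 :=
  filterV_outdeg_self

lemma delLeafNet_outdeg {x : X} {p u : ℕ} (hin : N.indeg (N.label x) = 1)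
    (hp : (p, N.label x) ∈ N.E) (hu : u ≠ N.label x) (hup : u ≠ p) :
    (N.delLeafNet x).outdeg u = N.outdeg u :=
  filterV_outdeg hin hp hu hup

lemma delLeafNet_outdeg_parent {x : X} {p : ℕ} (hp : (p, N.label x) ∈ N.E)
    (hpl : p ≠ N.label x) : (N.delLeafNet x).outdeg p = N.outdeg p - 1 :=
  filterV_outdeg_parent hp hpl

end Network
open Network

/-- every reducible pair of `N(x,y)` that is not a reducible pair
of `N` involves `x` or `y`. -/
theorem new_reducible_pairs_involve_x_or_y (X : Type) (N : Network X)
    (hN : N.IsPhylo) (x y : X) (hxy : N.ReduciblePair x y) (z w : X)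
    (hnew : (N.reducePair (x, y)).ReduciblePair z w)
    (hold : ¬ N.ReduciblePair z w) :
    z = x ∨ z = y ∨ w = x ∨ w = y := by
  by_contra hcon
  push_neg at hcon
  obtain ⟨hzx, hzy, hwx, hwy⟩ := hcon
  obtain ⟨hrootV, hrootin, hrootout, hEV, hinj, hleaf, -, hcls, hacyc⟩ := hN
  have noloop : ∀ v : ℕ, (v, v) ∉ N.E := fun v hv => hacyc v (Relation.TransGen.single hv)
  have no2cyc : ∀ a b : ℕ, (a, b) ∈ N.E → (b, a) ∈ N.E → False := fun a b h1 h2 =>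
    hacyc a (Relation.TransGen.head h1 (Relation.TransGen.single h2))
  by_cases hch : N.IsCherry x y
  · -- Case A : cherry
    obtain ⟨hx, hy, hxney, p, hplx, hply⟩ := id hch
    obtain ⟨hlxin, hlxout⟩ := (hleaf x hx).2
    obtain ⟨hlyin, hlyout⟩ := (hleaf y hy).2
    have hlxly : N.label x ≠ N.label y := fun h => hxney (hinj hx hy h)
    have hpout2 : 2 ≤ N.outdeg p := two_le_outdeg hplx hply hlxly
    have hplxne : p ≠ N.label x := by intro h; rw [h, hlxout] at hpout2; omega
    have hplyne : p ≠ N.label y := by intro h; rw [h, hlyout] at hpout2; omega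
    have hpin : N.indeg p = 1 := by
      rcases hcls p (hEV _ hplx).1 with h | h | h | h
      · rw [h, hrootout] at hpout2; omega
      · rw [h.2] at hpout2; omega
      · exact h.1
      · rw [h.2] at hpout2; omega
    have hptree : N.IsTreeNode p := ⟨hpin, hpout2⟩
    obtain ⟨q, hqp⟩ := exists_edge_into hpin
    have hqnep : q ≠ p := fun h => noloop p (h ▸ hqp)
    have hqnelx : q ≠ N.label x := fun h => no_out_edge hlxout (h ▸ hqp)
    set D := N.delLeafNet x with hD
    have hDin : ∀ u, u ≠ N.label x → D.indeg u = N.indeg u :=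
      fun u hu => delLeafNet_indeg hlxout hu
    have hDinlx : D.indeg (N.label x) = 0 := delLeafNet_indeg_self x
    have hDoutlx : D.outdeg (N.label x) = 0 := delLeafNet_outdeg_self x
    have hDout : ∀ u, u ≠ N.label x → u ≠ p → D.outdeg u = N.outdeg u :=
      fun u h1 h2 => delLeafNet_outdeg hlxin hplx h1 h2
    have hDoutp : D.outdeg p = N.outdeg p - 1 := delLeafNet_outdeg_parent hplx hplxne
    have hDinp : D.indeg p = 1 := by rw [hDin p hplxne]; exact hpin
    have hqpD : (q, p) ∈ D.E := Finset.mem_filter.mpr ⟨hqp, hqnelx, hplxne⟩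
    have hplyD : (p, N.label y) ∈ D.E :=
      Finset.mem_filter.mpr ⟨hply, hplxne, Ne.symm hlxly⟩
    have hDsub : ∀ e ∈ D.E, e ∈ N.E := fun e he => (Finset.mem_filter.mp he).1
    have hqlyN : (q, N.label y) ∉ N.E := fun h => hqnep (edge_into_unique hlyin h hply)
    have hqlyD : (q, N.label y) ∉ D.E := fun h => hqlyN (hDsub _ h)
    set N' := D.suppress p with hN'
    have hN'eq : N.reducePair (x, y) = N' := by
      unfold reducePair
      rw [if_pos (show N.IsCherry (x, y).1 (x, y).2 from hch)]
      rw [show N.theParent (N.label (x, y).1) = p from theParent_eq hlxin hplx]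
      rfl
    rw [hN'eq] at hnew
    have hlynep : N.label y ≠ p := Ne.symm hplyne
    -- uniform facts
    have hG2 : ∀ u, u ≠ N.label x → u ≠ p →
        N'.indeg u = N.indeg u ∧ N'.outdeg u = N.outdeg u := by
      intro u h1 h2
      by_cases hfire : D.outdeg p = 1
      · have hsi := suppress_indeg hDinp hfire hqpD hplyD hqnep hlynep hqlyD h2
        have hso := suppress_outdeg hDinp hfire hqpD hplyD hqnep hlynep hqlyD h2
        exact ⟨hsi.trans (hDin u h1), hso.trans (hDout u h1 h2)⟩
      · have heq : N' = D := suppress_of_not (fun hh => hfire hh.2)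
        rw [heq]
        exact ⟨hDin u h1, hDout u h1 h2⟩
    have hG1 : ∀ e ∈ N'.E, e.2 ≠ N.label y → e ∈ N.E := by
      intro e he h2
      by_cases hfire : D.outdeg p = 1
      · rw [hN', suppress_E_eq hDinp hfire hqpD hplyD] at he
        rcases Finset.mem_union.mp he with h | h
        · exact hDsub _ (Finset.mem_filter.mp h).1
        · rw [Finset.mem_singleton] at h
          exact absurd (congrArg Prod.snd h) h2
      · rw [hN', suppress_of_not (fun hh => hfire hh.2)] at he
        exact hDsub _ he
    have hG3 : N'.indeg p ≤ 1 := by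
      by_cases hfire : D.outdeg p = 1
      · rw [hN', suppress_indeg_self hDinp hfire hqpD hplyD hlynep]
        omega
      · rw [hN', suppress_of_not (fun hh => hfire hh.2), hDinp]
    have hG4 : N'.indeg (N.label x) ≤ 1 := by
      by_cases hfire : D.outdeg p = 1
      · rw [hN', suppress_indeg hDinp hfire hqpD hplyD hqnep hlynep hqlyD
          (Ne.symm hplxne), hDinlx]
        omega
      · rw [hN', suppress_of_not (fun hh => hfire hh.2), hDinlx]
        omega
    have hG5 : N'.indeg (N.label y) ≤ 1 := by
      rw [(hG2 _ (Ne.symm hlxly) hlynep).1, hlyin]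
    have hG6x : N'.outdeg (N.label x) = 0 := by
      by_cases hfire : D.outdeg p = 1
      · rw [hN', suppress_outdeg hDinp hfire hqpD hplyD hqnep hlynep hqlyD
          (Ne.symm hplxne), hDoutlx]
      · rw [hN', suppress_of_not (fun hh => hfire hh.2), hDoutlx]
    have hG6y : N'.outdeg (N.label y) = 0 := by
      rw [(hG2 _ (Ne.symm hlxly) hlynep).2, hlyout]
    have hT : N'.taxa = N.taxa.erase x := by
      rw [hN', suppress_taxa]
      rfl
    have hL : N'.label = N.label := by
      rw [hN', suppress_label]
      rfl
    have hnew' : N'.IsCherry z w ∨ N'.IsRetCherry z w := hnew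
    rcases hnew' with hcz | hrz
    · obtain ⟨hz, hw, hzw, r, hrz1, hrz2⟩ := hcz
      rw [hT] at hz hw
      have hz' := Finset.mem_of_mem_erase hz
      have hw' := Finset.mem_of_mem_erase hw
      rw [hL] at hrz1 hrz2
      have hlzy : N.label z ≠ N.label y := fun h => hzy (hinj hz' hy h)
      have hlwy : N.label w ≠ N.label y := fun h => hwy (hinj hw' hy h)
      exact hold (Or.inl ⟨hz', hw', hzw, r, hG1 _ hrz1 hlzy, hG1 _ hrz2 hlwy⟩)
    · obtain ⟨hz, hw, hzw, pz, pw, hpzE, hpwE, hpzR, hpwT, hEdge⟩ := hrz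
      rw [hT] at hz hw
      have hz' := Finset.mem_of_mem_erase hz
      have hw' := Finset.mem_of_mem_erase hw
      rw [hL] at hpzE hpwE
      have hlzy : N.label z ≠ N.label y := fun h => hzy (hinj hz' hy h)
      have hlwy : N.label w ≠ N.label y := fun h => hwy (hinj hw' hy h)
      have hpzE' : (pz, N.label z) ∈ N.E := hG1 _ hpzE hlzy
      have hpwE' : (pw, N.label w) ∈ N.E := hG1 _ hpwE hlwy
      have hpz2 : 2 ≤ N'.indeg pz := hpzR.1
      have hpznelx : pz ≠ N.label x := by intro h; rw [h] at hpz2; omega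
      have hpznely : pz ≠ N.label y := by intro h; rw [h] at hpz2; omega
      have hpznep : pz ≠ p := by intro h; rw [h] at hpz2; omega
      have hEdge' : (pw, pz) ∈ N.E := hG1 _ hEdge hpznely
      have hpzR' : N.IsRetic pz := by
        obtain ⟨hi, ho⟩ := hG2 pz hpznelx hpznep
        exact ⟨by rw [← hi]; exact hpzR.1, by rw [← ho]; exact hpzR.2⟩
      have hpw2 : 2 ≤ N'.outdeg pw := hpwT.2
      have hpwnelx : pw ≠ N.label x := by intro h; rw [h, hG6x] at hpw2; omega
      have hpwnely : pw ≠ N.label y := by intro h; rw [h, hG6y] at hpw2; omega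
      have hpwT' : N.IsTreeNode pw := by
        by_cases hpwp : pw = p
        · rw [hpwp]; exact hptree
        · obtain ⟨hi, ho⟩ := hG2 pw hpwnelx hpwp
          exact ⟨by rw [← hi]; exact hpwT.1, by rw [← ho]; exact hpwT.2⟩
      exact hold (Or.inr ⟨hz', hw', hzw, pz, pw, hpzE', hpwE', hpzR', hpwT', hEdge'⟩)
  · -- Case B : reticulated cherry
    have hrc : N.IsRetCherry x y := hxy.resolve_left hch
    obtain ⟨hx, hy, hxney, px, py, hpxlx, hpyly, hpxR, hpyT, hpypx⟩ := id hrc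
    obtain ⟨hlxin, hlxout⟩ := (hleaf x hx).2
    obtain ⟨hlyin, hlyout⟩ := (hleaf y hy).2
    have hlxly : N.label x ≠ N.label y := fun h => hxney (hinj hx hy h)
    obtain ⟨hpxin2, hpxout1⟩ := id hpxR
    obtain ⟨hpyin1, hpyout2⟩ := id hpyT
    have hpxpy : px ≠ py := fun h => noloop py (h ▸ hpypx)
    have hlxpx : N.label x ≠ px := by intro h; rw [← h, hlxout] at hpxout1; omega
    have hlxpy : N.label x ≠ py := by intro h; rw [← h, hlxout] at hpyout2; omega
    have hlypx : N.label y ≠ px := by intro h; rw [← h, hlyout] at hpxout1; omega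
    have hlypy : N.label y ≠ py := by intro h; rw [← h, hlyout] at hpyout2; omega
    obtain ⟨qy, hqypy⟩ := exists_edge_into hpyin1
    have hqynepy : qy ≠ py := fun h => noloop py (h ▸ hqypy)
    have hqynepx : qy ≠ px := fun h => no2cyc py px hpypx (h ▸ hqypy)
    set M1 := N.delEdge (py, px) with hM1
    have hM1sub : ∀ e ∈ M1.E, e ∈ N.E := fun e he => Finset.mem_of_mem_erase he
    have hM1in : ∀ u, u ≠ px → M1.indeg u = N.indeg u := fun u hu => delEdge_indeg hu
    have hM1out : ∀ u, u ≠ py → M1.outdeg u = N.outdeg u := fun u hu => delEdge_outdeg hu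
    have hM1inpx : M1.indeg px = N.indeg px - 1 := delEdge_indeg_target hpypx
    have hM1outpy : M1.outdeg py = N.outdeg py - 1 := delEdge_outdeg_src hpypx
    have hM1inpy : M1.indeg py = 1 := by rw [hM1in py (Ne.symm hpxpy)]; exact hpyin1
    have hM1outpx : M1.outdeg px = 1 := by rw [hM1out px hpxpy]; exact hpxout1
    have hpylyM1 : (py, N.label y) ∈ M1.E :=
      Finset.mem_erase.mpr ⟨fun h => hlypx (congrArg Prod.snd h), hpyly⟩
    have hqypyM1 : (qy, py) ∈ M1.E :=
      Finset.mem_erase.mpr ⟨fun h => hqynepy (congrArg Prod.fst h), hqypy⟩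
    have hpxlxM1 : (px, N.label x) ∈ M1.E :=
      Finset.mem_erase.mpr ⟨fun h => hpxpy (congrArg Prod.fst h), hpxlx⟩
    have hqylyN : (qy, N.label y) ∉ N.E := fun h => hqynepy (edge_into_unique hlyin h hpyly)
    have hqylyM1 : (qy, N.label y) ∉ M1.E := fun h => hqylyN (hM1sub _ h)
    have hlynepy : N.label y ≠ py := hlypy
    set M2 := M1.suppress py with hM2
    have hM2sub : ∀ e ∈ M2.E, e.2 ≠ N.label y → e ∈ M1.E := by
      intro e he h2
      by_cases hfy : M1.outdeg py = 1
      · rw [hM2, suppress_E_eq hM1inpy hfy hqypyM1 hpylyM1] at he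
        rcases Finset.mem_union.mp he with h | h
        · exact (Finset.mem_filter.mp h).1
        · rw [Finset.mem_singleton] at h
          exact absurd (congrArg Prod.snd h) h2
      · rw [hM2, suppress_of_not (fun hh => hfy hh.2)] at he
        exact he
    have hM2in : ∀ u, u ≠ py → M2.indeg u = M1.indeg u := by
      intro u hu
      by_cases hfy : M1.outdeg py = 1
      · exact suppress_indeg hM1inpy hfy hqypyM1 hpylyM1 hqynepy hlynepy hqylyM1 hu
      · rw [hM2, suppress_of_not (fun hh => hfy hh.2)]
    have hM2out : ∀ u, u ≠ py → M2.outdeg u = M1.outdeg u := by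
      intro u hu
      by_cases hfy : M1.outdeg py = 1
      · exact suppress_outdeg hM1inpy hfy hqypyM1 hpylyM1 hqynepy hlynepy hqylyM1 hu
      · rw [hM2, suppress_of_not (fun hh => hfy hh.2)]
    have hM2inpy : M2.indeg py ≤ 1 := by
      by_cases hfy : M1.outdeg py = 1
      · rw [hM2, suppress_indeg_self hM1inpy hfy hqypyM1 hpylyM1 hlynepy]
        omega
      · rw [hM2, suppress_of_not (fun hh => hfy hh.2), hM1inpy]
    have hM2outpy : M2.outdeg py ≤ 1 ∨ M2.outdeg py = M1.outdeg py := by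
      by_cases hfy : M1.outdeg py = 1
      · left
        rw [hM2, suppress_outdeg_self hM1inpy hfy hqypyM1 hpylyM1 hqynepy]
        omega
      · right
        rw [hM2, suppress_of_not (fun hh => hfy hh.2)]
    have hpxlxM2 : (px, N.label x) ∈ M2.E := by
      by_cases hfy : M1.outdeg py = 1
      · rw [hM2, suppress_E_eq hM1inpy hfy hqypyM1 hpylyM1]
        exact Finset.mem_union_left _ (Finset.mem_filter.mpr ⟨hpxlxM1, hpxpy, hlxpy⟩)
      · rw [hM2, suppress_of_not (fun hh => hfy hh.2)]
        exact hpxlxM1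
    have hM2inpx : M2.indeg px = N.indeg px - 1 := (hM2in px hpxpy).trans hM1inpx
    have hM2outpx : M2.outdeg px = 1 := (hM2out px hpxpy).trans hM1outpx
    have hlxnepx : N.label x ≠ px := hlxpx
    have hbundle : M2.indeg px = 1 → ∃ rx, (rx, px) ∈ M2.E ∧ rx ≠ px ∧
        (rx, N.label x) ∉ M2.E := by
      intro hfx
      obtain ⟨rx, hrxpx⟩ := exists_edge_into hfx
      have hrxnepx : rx ≠ px := by
        intro h
        subst h
        have : (rx, rx) ∈ M1.E := hM2sub _ hrxpx (fun hh => hlypx (hh.symm))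
        exact noloop rx (hM1sub _ this)
      refine ⟨rx, hrxpx, hrxnepx, ?_⟩
      intro hmem
      have h1 : (rx, N.label x) ∈ M1.E := hM2sub _ hmem (fun hh => hlxly (hh.symm).symm)
      exact hrxnepx (edge_into_unique hlxin (hM1sub _ h1) hpxlx)
    set N2 := M2.suppress px with hN2
    have hN'eq : N.reducePair (x, y) = N2 := by
      unfold reducePair
      rw [if_neg (show ¬ N.IsCherry (x, y).1 (x, y).2 from hch)]
      rw [if_pos (show N.IsRetCherry (x, y).1 (x, y).2 from hrc)]
      rw [show N.theParent (N.label (x, y).2) = py from theParent_eq hlyin hpyly,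
          show N.theParent (N.label (x, y).1) = px from theParent_eq hlxin hpxlx]
    rw [hN'eq] at hnew
    have hN2sub : ∀ e ∈ N2.E, e.2 ≠ N.label x → e ∈ M2.E := by
      intro e he h2
      by_cases hfx : M2.indeg px = 1
      · obtain ⟨rx, hrxpx, hrxnepx, hrxlx⟩ := hbundle hfx
        rw [hN2, suppress_E_eq hfx hM2outpx hrxpx hpxlxM2] at he
        rcases Finset.mem_union.mp he with h | h
        · exact (Finset.mem_filter.mp h).1
        · rw [Finset.mem_singleton] at h
          exact absurd (congrArg Prod.snd h) h2
      · rw [hN2, suppress_of_not (fun hh => hfx hh.1)] at he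
        exact he
    have hN2in : ∀ u, u ≠ px → N2.indeg u = M2.indeg u := by
      intro u hu
      by_cases hfx : M2.indeg px = 1
      · obtain ⟨rx, hrxpx, hrxnepx, hrxlx⟩ := hbundle hfx
        exact suppress_indeg hfx hM2outpx hrxpx hpxlxM2 hrxnepx hlxnepx hrxlx hu
      · rw [hN2, suppress_of_not (fun hh => hfx hh.1)]
    have hN2out : ∀ u, u ≠ px → N2.outdeg u = M2.outdeg u := by
      intro u hu
      by_cases hfx : M2.indeg px = 1
      · obtain ⟨rx, hrxpx, hrxnepx, hrxlx⟩ := hbundle hfx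
        exact suppress_outdeg hfx hM2outpx hrxpx hpxlxM2 hrxnepx hlxnepx hrxlx hu
      · rw [hN2, suppress_of_not (fun hh => hfx hh.1)]
    have hN2outpx : N2.outdeg px ≤ 1 := by
      by_cases hfx : M2.indeg px = 1
      · obtain ⟨rx, hrxpx, hrxnepx, hrxlx⟩ := hbundle hfx
        rw [hN2, suppress_outdeg_self hfx hM2outpx hrxpx hpxlxM2 hrxnepx]
        omega
      · rw [hN2, suppress_of_not (fun hh => hfx hh.1), hM2outpx]
    -- composite facts
    have hF1 : ∀ e ∈ N2.E, e.2 ≠ N.label x → e.2 ≠ N.label y → e ∈ N.E :=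
      fun e he h1 h2 => hM1sub _ (hM2sub _ (hN2sub _ he h1) h2)
    have hF2 : ∀ u, u ≠ px → u ≠ py →
        N2.indeg u = N.indeg u ∧ N2.outdeg u = N.outdeg u := by
      intro u h1 h2
      exact ⟨((hN2in u h1).trans (hM2in u h2)).trans (hM1in u h1),
        ((hN2out u h1).trans (hM2out u h2)).trans (hM1out u h2)⟩
    have hF3 : N2.indeg py ≤ 1 := by
      rw [hN2in py (Ne.symm hpxpy)]
      exact hM2inpy
    have hFlxin : N2.indeg (N.label x) = 1 := by rw [(hF2 _ hlxpx hlxpy).1]; exact hlxin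
    have hFlyin : N2.indeg (N.label y) = 1 := by rw [(hF2 _ hlypx hlypy).1]; exact hlyin
    have hFlxout : N2.outdeg (N.label x) = 0 := by rw [(hF2 _ hlxpx hlxpy).2]; exact hlxout
    have hFlyout : N2.outdeg (N.label y) = 0 := by rw [(hF2 _ hlypx hlypy).2]; exact hlyout
    have hT : N2.taxa = N.taxa := by
      rw [hN2, suppress_taxa, hM2, suppress_taxa]
      rfl
    have hL : N2.label = N.label := by
      rw [hN2, suppress_label, hM2, suppress_label]
      rfl
    have hnew' : N2.IsCherry z w ∨ N2.IsRetCherry z w := hnew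
    rcases hnew' with hcz | hrz
    · obtain ⟨hz, hw, hzw, r, hrz1, hrz2⟩ := hcz
      rw [hT] at hz hw
      rw [hL] at hrz1 hrz2
      have hlzx : N.label z ≠ N.label x := fun h => hzx (hinj hz hx h)
      have hlzy : N.label z ≠ N.label y := fun h => hzy (hinj hz hy h)
      have hlwx : N.label w ≠ N.label x := fun h => hwx (hinj hw hx h)
      have hlwy : N.label w ≠ N.label y := fun h => hwy (hinj hw hy h)
      exact hold (Or.inl ⟨hz, hw, hzw, r, hF1 _ hrz1 hlzx hlzy, hF1 _ hrz2 hlwx hlwy⟩)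
    · obtain ⟨hz, hw, hzw, pz, pw, hpzE, hpwE, hpzR, hpwT, hEdge⟩ := hrz
      rw [hT] at hz hw
      rw [hL] at hpzE hpwE
      have hlzx : N.label z ≠ N.label x := fun h => hzx (hinj hz hx h)
      have hlzy : N.label z ≠ N.label y := fun h => hzy (hinj hz hy h)
      have hlwx : N.label w ≠ N.label x := fun h => hwx (hinj hw hx h)
      have hlwy : N.label w ≠ N.label y := fun h => hwy (hinj hw hy h)
      have hpzE' : (pz, N.label z) ∈ N.E := hF1 _ hpzE hlzx hlzy
      have hpwE' : (pw, N.label w) ∈ N.E := hF1 _ hpwE hlwx hlwy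
      have hpz2 : 2 ≤ N2.indeg pz := hpzR.1
      have hpznelx : pz ≠ N.label x := by intro h; rw [h, hFlxin] at hpz2; omega
      have hpznely : pz ≠ N.label y := by intro h; rw [h, hFlyin] at hpz2; omega
      have hpznepy : pz ≠ py := by intro h; rw [h] at hpz2; omega
      have hpznepx : pz ≠ px := by
        intro h
        subst h
        exact hlzx (edge_out_unique hpxout1 hpzE' hpxlx)
      have hEdge' : (pw, pz) ∈ N.E := hF1 _ hEdge hpznelx hpznely
      have hpzR' : N.IsRetic pz := by
        obtain ⟨hi, ho⟩ := hF2 pz hpznepx hpznepy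
        exact ⟨by rw [← hi]; exact hpzR.1, by rw [← ho]; exact hpzR.2⟩
      have hpw2 : 2 ≤ N2.outdeg pw := hpwT.2
      have hpwnelx : pw ≠ N.label x := by intro h; rw [h, hFlxout] at hpw2; omega
      have hpwnely : pw ≠ N.label y := by intro h; rw [h, hFlyout] at hpw2; omega
      have hpwnepx : pw ≠ px := by intro h; rw [h] at hpw2; omega
      have hpwT' : N.IsTreeNode pw := by
        by_cases hpwp : pw = py
        · rw [hpwp]; exact hpyT
        · obtain ⟨hi, ho⟩ := hF2 pw hpwnepx hpwp
          exact ⟨by rw [← hi]; exact hpwT.1, by rw [← ho]; exact hpwT.2⟩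
      exact hold (Or.inr ⟨hz, hw, hzw, pz, pw, hpzE', hpwE', hpzR', hpwT', hEdge'⟩)
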